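/- Let G be a connected simple graph with n vertices and m edges, let 0 = λ_1 < λ_2 ≤ ... ≤ λ_n be the eigenvalues of its Laplacian matrix, and let r_L(G) = λ_n/λ_2. Then BH(G) ≤ (n(n-1)²/(4(2m + M_1(G)))) · (4 + (r_L(G) − 1/r_L(G))²). -/

import Mathlib

open Finset Polynomial

open Matrix in
open Finset Matrix

lemma trace_sq_eq_sum_sq {m : Type*} [Fintype m] [DecidableEq m] {A : Matrix m m ℝ}
    (hA : A.IsHermitian) : (A * A).trace = ∑ i, hA.eigenvalues i ^ 2 := by
  have h := hA.conjStarAlgAut_star_eigenvectorUnitary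
  rw [Unitary.conjStarAlgAut_star_apply] at h
  set U := (hA.eigenvectorUnitary : Matrix m m ℝ) with hUdef
  have hU1 : U * star U = 1 := (Matrix.mem_unitaryGroup_iff).mp hA.eigenvectorUnitary.2
  have hU2 : star U * U = 1 := (Matrix.mem_unitaryGroup_iff').mp hA.eigenvectorUnitary.2
  have key : (star U * A * U) * (star U * A * U) = star U * (A * A) * U := by
    rw [mul_assoc (star U * A) U, ← mul_assoc U (star U * A) U, ← mul_assoc U (star U) A,
      hU1, one_mul, mul_assoc, mul_assoc, mul_assoc]
  have : ((star U * A * U) * (star U * A * U)).trace = (A * A).trace := by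
    rw [key, Matrix.trace_mul_cycle, hU1, one_mul]
  rw [← this, h]
  simp [Matrix.diagonal_mul_diagonal, Matrix.trace_diagonal, RCLike.ofReal_real_eq_id, sq]

open Matrix in
lemma trace_lapSq {V : Type*} [Fintype V] [DecidableEq V] (G : SimpleGraph V) [DecidableRel G.Adj] :
    ((G.lapMatrix ℝ) * (G.lapMatrix ℝ)).trace
      = 2 * (G.edgeFinset.card : ℝ) + ∑ v, (G.degree v : ℝ) ^ 2 := by
  have h1 : ((G.degMatrix ℝ) * (G.degMatrix ℝ)).trace = ∑ v, (G.degree v : ℝ) ^ 2 := by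
    simp [SimpleGraph.degMatrix, Matrix.diagonal_mul_diagonal, Matrix.trace_diagonal, sq]
  have h2 : ((G.degMatrix ℝ) * (G.adjMatrix ℝ)).trace = 0 := by
    simp only [Matrix.trace, Matrix.diag, Matrix.mul_apply]
    refine Finset.sum_eq_zero fun v _ => Finset.sum_eq_zero fun w _ => ?_
    rcases eq_or_ne v w with h | h
    · subst h; simp
    · simp [SimpleGraph.degMatrix, Matrix.diagonal_apply_ne _ h]
  have h3 : ((G.adjMatrix ℝ) * (G.degMatrix ℝ)).trace = 0 := by
    simp only [Matrix.trace, Matrix.diag, Matrix.mul_apply]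
    refine Finset.sum_eq_zero fun v _ => Finset.sum_eq_zero fun w _ => ?_
    rcases eq_or_ne w v with h | h
    · subst h; simp
    · simp [SimpleGraph.degMatrix, Matrix.diagonal_apply_ne _ h]
  have h4 : ((G.adjMatrix ℝ) * (G.adjMatrix ℝ)).trace = 2 * (G.edgeFinset.card : ℝ) := by
    have hd := G.sum_degrees_eq_twice_card_edges
    have : ∀ v, ∑ w, (G.adjMatrix ℝ) v w * (G.adjMatrix ℝ) w v = (G.degree v : ℝ) := by
      intro v
      rw [G.degree_eq_sum_if_adj v]
      refine Finset.sum_congr rfl fun w _ => ?_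
      by_cases h : G.Adj v w
      · simp [SimpleGraph.adjMatrix_apply, h, h.symm]
      · simp [SimpleGraph.adjMatrix_apply, h, fun hh : G.Adj w v => h hh.symm]
    simp only [Matrix.trace, Matrix.diag, Matrix.mul_apply, this]
    rw [← Nat.cast_sum, hd]
    push_cast; ring
  simp only [SimpleGraph.lapMatrix, sub_mul, mul_sub, Matrix.trace_sub, h1, h2, h3, h4]
  ring

/-- The eigenvalues of the Laplacian matrix of `G` over `ℝ`, as produced (in no
particular order) by the spectral theorem for symmetric matrices. -/
noncomputable def lapEigsUnordered {V : Type*} [Fintype V] [DecidableEq V]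
    (G : SimpleGraph V) [DecidableRel G.Adj] : V → ℝ :=
  (SimpleGraph.posSemidef_lapMatrix (R := ℝ) (G := G)).1.eigenvalues

/-- `μ : Fin n → ℝ` lists the eigenvalues of the Laplacian matrix of `G`
in nondecreasing order (so, `0`-based, `μ ⟨0,_⟩ = λ₁ ≤ μ ⟨1,_⟩ = λ₂ ≤ ⋯`). -/
def IsLapEigSeq {V : Type*} [Fintype V] [DecidableEq V] (G : SimpleGraph V)
    [DecidableRel G.Adj] {n : ℕ} (μ : Fin n → ℝ) : Prop :=
  Monotone μ ∧ ∃ e : V ≃ Fin n, ∀ v, lapEigsUnordered G v = μ (e v)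

theorem statement_1 {n : ℕ} (hn : 2 ≤ n) (G : SimpleGraph (Fin n)) [DecidableRel G.Adj]
    (hG : G.Connected) (μ : Fin n → ℝ) (hμ : IsLapEigSeq G μ)
    (hμ1 : μ ⟨0, by omega⟩ = 0) (hμ2 : 0 < μ ⟨1, by omega⟩) :
    (n : ℝ) * ∑ i ∈ univ.filter (fun i : Fin n => 0 < i.val), 1 / μ i ^ 2 ≤
      ((n : ℝ) * ((n : ℝ) - 1) ^ 2 / (4 * (2 * (G.edgeFinset.card : ℝ) + ∑ v, ((G.degree v : ℝ)) ^ 2))) *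
        (4 + (μ ⟨n - 1, by omega⟩ / μ ⟨1, by omega⟩ - μ ⟨1, by omega⟩ / μ ⟨n - 1, by omega⟩) ^ 2) := by
  obtain ⟨hmono, e, he⟩ := hμ
  set a := μ ⟨1, by omega⟩ with ha
  set b := μ ⟨n - 1, by omega⟩ with hb
  set s := univ.filter (fun i : Fin n => 0 < i.val) with hs
  have hab : a ≤ b := hmono (by simp only [Fin.mk_le_mk]; omega)
  have hbpos : 0 < b := lt_of_lt_of_le hμ2 hab
  -- bounds on eigenvalues in s
  have hlow : ∀ i ∈ s, a ≤ μ i := by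
    intro i hi
    simp only [hs, mem_filter, mem_univ, true_and] at hi
    refine hmono ?_
    rw [Fin.le_def]
    simpa using Nat.succ_le_of_lt hi
  have hhigh : ∀ i ∈ s, μ i ≤ b := by
    intro i hi
    refine hmono ?_
    rw [Fin.le_def]
    simp only [Fin.val_mk]
    omega
  -- sum of squares
  set S := ∑ i ∈ s, μ i ^ 2 with hSdef
  have htr : 2 * (G.edgeFinset.card : ℝ) + ∑ v, (G.degree v : ℝ) ^ 2 = S := by
    rw [← trace_lapSq G, trace_sq_eq_sum_sq (SimpleGraph.posSemidef_lapMatrix (R := ℝ) (G := G)).1]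
    have h1 : ∑ v, ((SimpleGraph.posSemidef_lapMatrix (R := ℝ) (G := G)).1.eigenvalues v) ^ 2
        = ∑ i : Fin n, μ i ^ 2 := by
      rw [← Equiv.sum_comp e (fun i => μ i ^ 2)]
      exact Finset.sum_congr rfl fun v _ => by rw [← he v]; rfl
    rw [h1, hSdef, ← Finset.sum_filter_add_sum_filter_not univ (fun i : Fin n => 0 < i.val)]
    have h2 : ∑ i ∈ univ.filter (fun i : Fin n => ¬ 0 < i.val), μ i ^ 2 = 0 := by
      refine Finset.sum_eq_zero fun i hi => ?_
      simp only [mem_filter] at hi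
      have : i = ⟨0, by omega⟩ := Fin.ext (by simp only [Fin.val_mk]; omega)
      rw [this, hμ1]; ring
    rw [h2, add_zero]
  have hSpos : 0 < S := by
    have h1s : (⟨1, by omega⟩ : Fin n) ∈ s := by simp [hs]
    calc 0 < a ^ 2 := by positivity
    _ ≤ S := Finset.single_le_sum (f := fun i => μ i ^ 2)
        (fun i _ => sq_nonneg _) h1s
  -- cardinality of s
  have hcard : (s.card : ℝ) = (n : ℝ) - 1 := by
    have : s = univ.erase ⟨0, by omega⟩ := by
      ext i
      simp only [hs, mem_filter, mem_erase, mem_univ, and_true, true_and]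
      constructor
      · intro h h0
        rw [h0] at h
        exact absurd h (lt_irrefl 0)
      · intro h
        rcases (Nat.eq_zero_or_pos i.val).symm with hp | hp
        · exact hp
        · exact absurd (Fin.ext hp) h
    rw [this, Finset.card_erase_of_mem (mem_univ _)]
    simp only [card_univ, Fintype.card_fin]
    have : (1:ℕ) ≤ n := by omega
    push_cast [Nat.cast_sub this]
    ring
  -- Kantorovich-type bound
  have key : ∀ i ∈ s, 1 / μ i ^ 2 ≤ (a ^ 2 + b ^ 2 - μ i ^ 2) / (a ^ 2 * b ^ 2) := by
    intro i hi
    have h1 := hlow i hi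
    have h2 := hhigh i hi
    have hμpos : 0 < μ i := lt_of_lt_of_le hμ2 h1
    rw [div_le_div_iff₀ (by positivity) (by positivity)]
    nlinarith [mul_nonneg (sub_nonneg.mpr (pow_le_pow_left₀ (le_of_lt hμ2) h1 2))
      (sub_nonneg.mpr (pow_le_pow_left₀ (le_of_lt hμpos) h2 2))]
  have hsum_bound : ∑ i ∈ s, 1 / μ i ^ 2
      ≤ ((s.card : ℝ) * (a ^ 2 + b ^ 2) - S) / (a ^ 2 * b ^ 2) := by
    calc ∑ i ∈ s, 1 / μ i ^ 2 ≤ ∑ i ∈ s, (a ^ 2 + b ^ 2 - μ i ^ 2) / (a ^ 2 * b ^ 2) :=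
          Finset.sum_le_sum key
    _ = ((s.card : ℝ) * (a ^ 2 + b ^ 2) - S) / (a ^ 2 * b ^ 2) := by
        rw [← Finset.sum_div, Finset.sum_sub_distrib, Finset.sum_const, nsmul_eq_mul, hSdef]
  -- finish
  rw [htr]
  have hnpos : (0:ℝ) < n := by positivity
  have hapos : 0 < a := hμ2
  calc (n : ℝ) * ∑ i ∈ s, 1 / μ i ^ 2
      ≤ (n : ℝ) * (((s.card : ℝ) * (a ^ 2 + b ^ 2) - S) / (a ^ 2 * b ^ 2)) := by
        exact mul_le_mul_of_nonneg_left hsum_bound (le_of_lt hnpos)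
    _ ≤ ((n : ℝ) * ((n : ℝ) - 1) ^ 2 / (4 * S)) * (4 + (b / a - a / b) ^ 2) := by
        have hexp : 4 + (b / a - a / b) ^ 2 = (a ^ 2 + b ^ 2) ^ 2 / (a ^ 2 * b ^ 2) := by
          field_simp; ring
        rw [← hcard, hexp, ← mul_div_assoc, div_mul_div_comm,
          div_le_div_iff₀ (by positivity) (by positivity)]
        nlinarith [mul_nonneg (mul_nonneg hnpos.le
          (mul_pos (pow_pos hapos 2) (pow_pos hbpos 2)).le)
          (sq_nonneg ((s.card : ℝ) * (a ^ 2 + b ^ 2) - 2 * S))]
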